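/- Let G ≤ S_d be a transitive subgroup, let σ ∈ G have cycle type (d₁, ..., d_r) on {1, ..., d}, and let G₀ = Stab_G(d) be the stabilizer of the point d. Then the number of double cosets G₀\G/⟨σ⟩ equals r, and there are double coset representatives g₁, ..., g_r such that the cardinality of the orbit of d under g_i σ g_i⁻¹ equals d_i for each i. -/

import Mathlib

lemma mem_orbit_zpowers_iff' {α : Type*} (σ : Equiv.Perm α) (x y : α) :
    y ∈ MulAction.orbit (Subgroup.zpowers σ) x ↔ ∃ k : ℤ, (σ ^ k) x = y := by
  constructor
  · rintro ⟨⟨u, k, rfl⟩, rfl⟩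
    exact ⟨k, rfl⟩
  · rintro ⟨k, rfl⟩
    exact ⟨⟨σ ^ k, k, rfl⟩, rfl⟩

lemma orbit_conj' {α : Type*} (g σ : Equiv.Perm α) (x : α) :
    MulAction.orbit (Subgroup.zpowers (g * σ * g⁻¹)) (g x)
      = g '' MulAction.orbit (Subgroup.zpowers σ) x := by
  ext y
  rw [mem_orbit_zpowers_iff']
  constructor
  · rintro ⟨k, rfl⟩
    refine ⟨(σ ^ k) x, (mem_orbit_zpowers_iff' σ x _).2 ⟨k, rfl⟩, ?_⟩
    rw [conj_zpow]
    simp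
  · rintro ⟨z, hz, rfl⟩
    obtain ⟨k, rfl⟩ := (mem_orbit_zpowers_iff' σ x z).1 hz
    refine ⟨k, ?_⟩
    rw [conj_zpow]
    simp

/-- For a transitive `G ≤ S_d` and `σ ∈ G` with cycle type `(d₁, …, d_r)` (orbit sizes of
`⟨σ⟩`, including fixed points), the double coset space `G₀\G/⟨σ⟩` (where `G₀` is the
stabilizer of the last point) has exactly `r` elements, with representatives `g₁, …, g_r`
such that the orbit of the last point under `⟨gᵢσgᵢ⁻¹⟩` has size `dᵢ`. -/
theorem stmt12 (n : ℕ) (G : Subgroup (Equiv.Perm (Fin (n + 1))))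
    (htrans : ∀ x y : Fin (n + 1), ∃ g ∈ G, g x = y)
    (σ : Equiv.Perm (Fin (n + 1))) (hσ : σ ∈ G)
    (r : ℕ) (c : Fin r → ℕ) (pts : Fin r → Fin (n + 1))
    (horbit : ∀ x : Fin (n + 1),
      ∃! i : Fin r, x ∈ MulAction.orbit (Subgroup.zpowers σ) (pts i))
    (hsize : ∀ i, Nat.card (MulAction.orbit (Subgroup.zpowers σ) (pts i)) = c i) :
    ∃ g : Fin r → G,
      Function.Bijective (fun i : Fin r =>
        DoubleCoset.mk (MulAction.stabilizer G (Fin.last n))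
          (Subgroup.zpowers (⟨σ, hσ⟩ : G)) (g i)) ∧
      ∀ i : Fin r,
        Nat.card (MulAction.orbit
          (Subgroup.zpowers ((g i : Equiv.Perm (Fin (n + 1))) * σ *
            (g i : Equiv.Perm (Fin (n + 1)))⁻¹)) (Fin.last n)) = c i := by
  choose g hgG hglast using fun i => htrans (pts i) (Fin.last n)
  have hinv : ∀ i, ((g i)⁻¹ : Equiv.Perm (Fin (n + 1))) (Fin.last n) = pts i := by
    intro i
    rw [← hglast i]
    simp
  refine ⟨fun i => ⟨g i, hgG i⟩, ⟨?_, ?_⟩, ?_⟩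
  · -- injective
    intro i j hij
    simp only at hij
    rw [DoubleCoset.eq] at hij
    obtain ⟨h, hh, k, hk, habk⟩ := hij
    obtain ⟨m, hm⟩ := hk
    -- show pts j ∈ orbit of pts i
    have hmem : pts j ∈ MulAction.orbit (Subgroup.zpowers σ) (pts i) := by
      rw [mem_orbit_zpowers_iff']
      refine ⟨-m, ?_⟩
      have hhlast : (h : Equiv.Perm (Fin (n + 1))) (Fin.last n) = Fin.last n := hh
      have hcoe : (g j : Equiv.Perm (Fin (n + 1)))
          = (h : Equiv.Perm (Fin (n + 1))) * g i * σ ^ m := by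
        have := congrArg (fun x : G => (x : Equiv.Perm (Fin (n + 1)))) habk
        simp only [Subgroup.coe_mul] at this
        rw [this, ← hm]
        norm_cast
      have : pts j = (σ ^ m)⁻¹ ((g i)⁻¹ ((h : Equiv.Perm (Fin (n + 1)))⁻¹ (Fin.last n))) := by
        rw [← hinv j, hcoe]
        simp [Equiv.Perm.mul_apply]
      rw [this]
      have : (h : Equiv.Perm (Fin (n + 1)))⁻¹ (Fin.last n) = Fin.last n := by
        apply (h : Equiv.Perm (Fin (n + 1))).injective
        simp [hhlast]
      rw [this, hinv i, ← zpow_neg]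
    obtain ⟨u, -, huniq⟩ := horbit (pts j)
    have h1 : j = u := huniq j (MulAction.mem_orbit_self _)
    have h2 : i = u := huniq i hmem
    rw [h1, h2]
  · -- surjective
    intro q
    obtain ⟨a, rfl⟩ : ∃ a : G, DoubleCoset.mk _ _ a = q := ⟨q.out, DoubleCoset.out_eq' _ _ q⟩
    set x := (a : Equiv.Perm (Fin (n + 1)))⁻¹ (Fin.last n) with hx
    obtain ⟨i, hi, -⟩ := horbit x
    obtain ⟨m, hm⟩ := (mem_orbit_zpowers_iff' σ (pts i) x).1 hi
    refine ⟨i, ?_⟩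
    simp only
    rw [DoubleCoset.eq]
    refine ⟨a * ((⟨σ, hσ⟩ : G) ^ m) * (⟨g i, hgG i⟩ : G)⁻¹, ?_,
      (⟨σ, hσ⟩ : G) ^ (-m), ⟨-m, rfl⟩, by group⟩
    show _ ∈ MulAction.stabilizer G (Fin.last n)
    rw [MulAction.mem_stabilizer_iff]
    show ((a * ((⟨σ, hσ⟩ : G) ^ m) * (⟨g i, hgG i⟩ : G)⁻¹ : G) :
      Equiv.Perm (Fin (n + 1))) (Fin.last n) = Fin.last n
    push_cast
    simp only [Function.comp_apply, Equiv.Perm.coe_mul]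
    rw [hinv i, hm]
    simp [hx]
  · -- sizes
    intro i
    have hlast : Fin.last n = (g i) (pts i) := (hglast i).symm
    rw [hlast, orbit_conj']
    rw [← hsize i]
    exact Nat.card_image_of_injective (g i).injective _
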